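/- Let ε be a random vector in R^n and let r = (r_1,…,r_G) be independent Rademacher random variables (each equal to ±1 with probability 1/2) independent of ε. Let Z be a fixed real n×k matrix and assume Zᵀ B_{εε'} Z is invertible almost surely. Define the G×G random matrix P = B_εᵀ Z (Zᵀ B_{εε'} Z)^{-1} Zᵀ B_ε and let Ṗ be P with its diagonal entries set to zero. If the random vector (r_1·ε_{[1]},…, r_G·ε_{[G]}) (stacked into R^n) has the same distribution as ε, then the random variable ι_Gᵀ Ṗ ι_G has the same distribution as rᵀ Ṗ r, where ι_G is the all-ones vector in R^G. -/

import Mathlib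

open Matrix MeasureTheory ProbabilityTheory BigOperators

/-- Index set of `n = n₁ + … + n_G` observations, grouped into `G` clusters. -/
abbrev ClusterIdx {G : ℕ} (ng : Fin G → ℕ) := Σ g : Fin G, Fin (ng g)

/-- The `n × G` matrix `B_v`: column `g` agrees with `v` on rows of cluster `g`
and is zero elsewhere. -/
def Bvec {G : ℕ} {ng : Fin G → ℕ} (v : ClusterIdx ng → ℝ) :
    Matrix (ClusterIdx ng) (Fin G) ℝ :=
  Matrix.of fun x g => if x.1 = g then v x else 0

/-- The `n × n` block-diagonal matrix `B_{vv'}` with `g`-th diagonal block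
`v_{[g]} v_{[g]}ᵀ`. -/
def Bouter {G : ℕ} {ng : Fin G → ℕ} (v : ClusterIdx ng → ℝ) :
    Matrix (ClusterIdx ng) (ClusterIdx ng) ℝ :=
  Matrix.of fun x y => if x.1 = y.1 then v x * v y else 0

variable {G : ℕ} {ng : Fin G → ℕ} {k : ℕ}

noncomputable def Pfun (Z : Matrix (ClusterIdx ng) (Fin k) ℝ) (v : ClusterIdx ng → ℝ) :
    Matrix (Fin G) (Fin G) ℝ :=
  (Bvec v)ᵀ * Z * (Zᵀ * Bouter v * Z)⁻¹ * Zᵀ * Bvec v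

noncomputable def Pdotfun (Z : Matrix (ClusterIdx ng) (Fin k) ℝ) (v : ClusterIdx ng → ℝ) :
    Matrix (Fin G) (Fin G) ℝ :=
  Matrix.of fun g h => if g = h then 0 else Pfun Z v g h

lemma Bvec_reflect (v : ClusterIdx ng → ℝ) (s : Fin G → ℝ) :
    Bvec (fun x => s x.1 * v x) = Bvec v * Matrix.diagonal s := by
  ext x g
  rw [Matrix.mul_diagonal]
  simp only [Bvec, Matrix.of_apply]
  by_cases h : x.1 = g
  · subst h; simp [mul_comm]
  · simp [h]

lemma Bouter_reflect (v : ClusterIdx ng → ℝ) (s : Fin G → ℝ) (hs : ∀ g, s g * s g = 1) :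
    Bouter (fun x => s x.1 * v x) = Bouter v := by
  ext x y
  simp only [Bouter, Matrix.of_apply]
  by_cases h : x.1 = y.1
  · simp only [h, if_pos rfl, if_true]
    have h1 : s y.1 * v x * (s y.1 * v y) = (s y.1 * s y.1) * (v x * v y) := by ring
    simp [h1, hs y.1]
  · simp [h]

lemma Pfun_reflect (Z : Matrix (ClusterIdx ng) (Fin k) ℝ) (v : ClusterIdx ng → ℝ)
    (s : Fin G → ℝ) (hs : ∀ g, s g * s g = 1) :
    Pfun Z (fun x => s x.1 * v x) = Matrix.diagonal s * Pfun Z v * Matrix.diagonal s := by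
  unfold Pfun
  rw [Bvec_reflect, Bouter_reflect v s hs, Matrix.transpose_mul, Matrix.diagonal_transpose]
  simp only [Matrix.mul_assoc]

lemma reflect_sum (Z : Matrix (ClusterIdx ng) (Fin k) ℝ) (v : ClusterIdx ng → ℝ)
    (s : Fin G → ℝ) (hs : ∀ g, s g * s g = 1) :
    (fun _ : Fin G => (1 : ℝ)) ⬝ᵥ (Pdotfun Z (fun x => s x.1 * v x)).mulVec
        (fun _ : Fin G => (1 : ℝ))
      = s ⬝ᵥ (Pdotfun Z v).mulVec s := by
  have hP := Pfun_reflect Z v s hs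
  simp only [dotProduct, Matrix.mulVec, dotProduct, mul_one, one_mul]
  refine Finset.sum_congr rfl fun g _ => ?_
  rw [Finset.mul_sum]
  refine Finset.sum_congr rfl fun h _ => ?_
  simp only [Pdotfun, Matrix.of_apply, hP, Matrix.diagonal_mul, Matrix.mul_diagonal]
  by_cases hgh : g = h
  · simp [hgh]
  · simp only [if_neg hgh]
    ring

instance {m n : Type*} [MeasurableSpace ℝ] : MeasurableSpace (Matrix m n ℝ) :=
  MeasurableSpace.pi

instance {m n : Type*} [Countable m] [Countable n] : BorelSpace (Matrix m n ℝ) :=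
  Pi.borelSpace

lemma measurable_matrix_mul {X m n p : Type*} [MeasurableSpace X] [Fintype n]
    {A : X → Matrix m n ℝ} {B : X → Matrix n p ℝ}
    (hA : Measurable A) (hB : Measurable B) : Measurable fun x => A x * B x := by
  refine measurable_pi_lambda _ fun i => measurable_pi_lambda _ fun j => ?_
  simp only [Matrix.mul_apply]
  exact Finset.measurable_sum _ fun c _ =>
    ((measurable_pi_apply c).comp ((measurable_pi_apply i).comp hA)).mul
      ((measurable_pi_apply j).comp ((measurable_pi_apply c).comp hB))

lemma continuous_Bouter : Continuous fun v : ClusterIdx ng → ℝ => Bouter v := by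
  refine continuous_pi fun x => continuous_pi fun y => ?_
  simp only [Bouter, Matrix.of_apply]
  by_cases h : x.1 = y.1
  · simp only [if_pos h]
    exact (continuous_apply x).mul (continuous_apply y)
  · simp only [if_neg h]; exact continuous_const

lemma measurable_Bvec : Measurable fun v : ClusterIdx ng → ℝ => Bvec v := by
  refine measurable_pi_lambda _ fun x => measurable_pi_lambda _ fun g => ?_
  simp only [Bvec, Matrix.of_apply]
  by_cases h : x.1 = g
  · simp only [if_pos h]; exact measurable_pi_apply x
  · simp only [if_neg h]; exact measurable_const

lemma measurable_inv_M (Z : Matrix (ClusterIdx ng) (Fin k) ℝ) :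
    Measurable fun v : ClusterIdx ng → ℝ => (Zᵀ * Bouter v * Z)⁻¹ := by
  have hM : Continuous fun v : ClusterIdx ng → ℝ => Zᵀ * Bouter v * Z :=
    (continuous_const.matrix_mul continuous_Bouter).matrix_mul continuous_const
  have hdet : Measurable fun v : ClusterIdx ng → ℝ => ((Zᵀ * Bouter v * Z).det)⁻¹ :=
    measurable_inv.comp hM.matrix_det.measurable
  have hadj : Measurable fun v : ClusterIdx ng → ℝ => (Zᵀ * Bouter v * Z).adjugate :=
    hM.matrix_adjugate.measurable
  refine measurable_pi_lambda _ fun i => measurable_pi_lambda _ fun j => ?_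
  have : ∀ v : ClusterIdx ng → ℝ, (Zᵀ * Bouter v * Z)⁻¹ i j =
      ((Zᵀ * Bouter v * Z).det)⁻¹ * (Zᵀ * Bouter v * Z).adjugate i j := by
    intro v
    rw [Matrix.inv_def, Ring.inverse_eq_inv]
    simp [Matrix.smul_apply]
  simp only [this]
  exact hdet.mul ((measurable_pi_apply j).comp ((measurable_pi_apply i).comp hadj))

lemma measurable_Pdotfun (Z : Matrix (ClusterIdx ng) (Fin k) ℝ) :
    Measurable fun v : ClusterIdx ng → ℝ => Pdotfun Z v := by
  have hP : Measurable fun v : ClusterIdx ng → ℝ => Pfun Z v := by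
    unfold Pfun
    exact measurable_matrix_mul (measurable_matrix_mul (measurable_matrix_mul
      (measurable_matrix_mul
        (measurable_pi_lambda _ fun g => measurable_pi_lambda _ fun x =>
          (measurable_pi_apply g).comp ((measurable_pi_apply x).comp measurable_Bvec))
        measurable_const) (measurable_inv_M Z)) measurable_const) measurable_Bvec
  refine measurable_pi_lambda _ fun g => measurable_pi_lambda _ fun h => ?_
  simp only [Pdotfun, Matrix.of_apply]
  by_cases hgh : g = h
  · simp only [if_pos hgh]; exact measurable_const
  · simp only [if_neg hgh]
    exact (measurable_pi_apply h).comp ((measurable_pi_apply g).comp hP)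

lemma measurable_F (Z : Matrix (ClusterIdx ng) (Fin k) ℝ) :
    Measurable fun v : ClusterIdx ng → ℝ =>
      (fun _ : Fin G => (1 : ℝ)) ⬝ᵥ (Pdotfun Z v).mulVec (fun _ : Fin G => (1 : ℝ)) := by
  simp only [dotProduct, Matrix.mulVec, dotProduct, mul_one, one_mul]
  refine Finset.measurable_sum _ fun g _ => Finset.measurable_sum _ fun h _ => ?_
  exact (measurable_pi_apply h).comp ((measurable_pi_apply g).comp (measurable_Pdotfun Z))

/-- distributional equivalence in Theorem 4: under cluster reflection
invariance, `ι_Gᵀ Ṗ ι_G` has the same distribution as `rᵀ Ṗ r`, where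
`P = B_εᵀ Z (Zᵀ B_{εε'} Z)⁻¹ Zᵀ B_ε` and `Ṗ` is `P` with zero diagonal. -/
theorem cluster_many_instrument_AR_identDistrib
    {Ω : Type*} [MeasurableSpace Ω] (μ : Measure Ω) [IsProbabilityMeasure μ]
    {G : ℕ} (ng : Fin G → ℕ) {k : ℕ}
    (Z : Matrix (ClusterIdx ng) (Fin k) ℝ)
    (ε : Ω → ClusterIdx ng → ℝ) (r : Ω → Fin G → ℝ)
    (hmeasε : Measurable ε) (hmeasr : Measurable r)
    -- each `r_g` is a Rademacher random variable
    (hrad : ∀ g : Fin G, Measure.map (fun ω => r ω g) μ =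
      (2 : ENNReal)⁻¹ • Measure.dirac (1 : ℝ) + (2 : ENNReal)⁻¹ • Measure.dirac (-1 : ℝ))
    -- the `r_g` are mutually independent
    (hrindep : iIndepFun
      (fun g ω => r ω g) μ)
    -- `r` is independent of `ε`
    (hrε : IndepFun r ε μ)
    -- `Zᵀ B_{εε'} Z` is invertible almost surely
    (hinv : ∀ᵐ ω ∂μ, IsUnit (Zᵀ * Bouter (ε ω) * Z))
    -- the random `G × G` matrix `P` and its zero-diagonal version `Ṗ`
    (Pmat Pdot : Ω → Matrix (Fin G) (Fin G) ℝ)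
    (hPmat : ∀ ω, Pmat ω =
      (Bvec (ε ω))ᵀ * Z * (Zᵀ * Bouter (ε ω) * Z)⁻¹ * Zᵀ * Bvec (ε ω))
    (hPdot : ∀ ω g h, Pdot ω g h = if g = h then 0 else Pmat ω g h)
    -- reflection invariance: `(r₁ ε_{[1]}, …, r_G ε_{[G]})` has the same law as `ε`
    (hrefl : IdentDistrib (fun ω => fun x : ClusterIdx ng => r ω x.1 * ε ω x) ε μ μ) :
    IdentDistrib
      (fun ω => (fun _ : Fin G => (1 : ℝ)) ⬝ᵥ (Pdot ω).mulVec (fun _ : Fin G => (1 : ℝ)))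
      (fun ω => r ω ⬝ᵥ (Pdot ω).mulVec (r ω)) μ μ := by
  classical
  have hPd : ∀ ω, Pdot ω = Pdotfun Z (ε ω) := by
    intro ω
    ext g h
    rw [hPdot, hPmat]
    rfl
  set F : (ClusterIdx ng → ℝ) → ℝ := fun v =>
    (fun _ : Fin G => (1 : ℝ)) ⬝ᵥ (Pdotfun Z v).mulVec (fun _ : Fin G => (1 : ℝ)) with hF
  have hmF : Measurable F := measurable_F Z
  have hη : Measurable (fun ω => fun x : ClusterIdx ng => r ω x.1 * ε ω x) :=
    measurable_pi_lambda _ fun x =>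
      ((measurable_pi_apply x.1).comp hmeasr).mul ((measurable_pi_apply x).comp hmeasε)
  have hae : ∀ᵐ ω ∂μ, ∀ g, r ω g * r ω g = 1 := by
    rw [ae_all_iff]
    intro g
    have hg : Measurable fun ω => r ω g := (measurable_pi_apply g).comp hmeasr
    have hs : MeasurableSet {x : ℝ | x * x = 1} :=
      measurableSet_eq_fun (measurable_id.mul measurable_id) measurable_const
    have h1 : ∀ᵐ x ∂(Measure.map (fun ω => r ω g) μ), x * x = 1 := by
      rw [hrad g, ae_add_measure_iff]
      constructor <;> refine Measure.ae_smul_measure ?_ _ <;>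
        · rw [ae_dirac_iff hs]; norm_num
    exact (ae_map_iff hg.aemeasurable hs).mp h1
  have haeq : (fun ω => F (fun x : ClusterIdx ng => r ω x.1 * ε ω x)) =ᵐ[μ]
      (fun ω => r ω ⬝ᵥ (Pdot ω).mulVec (r ω)) := by
    filter_upwards [hae] with ω hω
    rw [hPd ω]
    exact reflect_sum Z (ε ω) (r ω) hω
  have h1 : IdentDistrib (F ∘ ε) (F ∘ fun ω => fun x : ClusterIdx ng => r ω x.1 * ε ω x) μ μ :=
    hrefl.symm.comp hmF
  have h2 : IdentDistrib (F ∘ fun ω => fun x : ClusterIdx ng => r ω x.1 * ε ω x)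
      (fun ω => r ω ⬝ᵥ (Pdot ω).mulVec (r ω)) μ μ :=
    IdentDistrib.of_ae_eq (hmF.comp hη).aemeasurable haeq
  have hL : (fun ω => (fun _ : Fin G => (1 : ℝ)) ⬝ᵥ (Pdot ω).mulVec (fun _ : Fin G => (1 : ℝ)))
      = F ∘ ε := by
    funext ω
    simp only [Function.comp_apply, hF, hPd ω]
  rw [hL]
  exact h1.trans h2
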